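/- arXiv:1409.7099 — 2 statements merged into one kernel-verified Lean document; each statement's English description precedes it below -/
import Mathlib

section
/- (Hardy–Littlewood inequality) For nonnegative measurable functions u, v on ℝⁿ vanishing at infinity, ∫_{ℝⁿ} u(x)v(x) dx ≤ ∫_{ℝⁿ} u*(x) v*(x) dx, where u*, v* denote the spherically symmetric decreasing rearrangements of u and v. -/
open MeasureTheory Metric Real

/-- The symmetric decreasing rearrangement of `u : ℝⁿ → ℝ`: the radial decreasing
function whose superlevel sets are balls centered at the origin with the same
measure as the corresponding superlevel sets of `u`. -/
noncomputable def symmetricRearrangement (n : ℕ) (u : EuclideanSpace ℝ (Fin n) → ℝ)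
    (x : EuclideanSpace ℝ (Fin n)) : ℝ :=
  sInf {t : ℝ | 0 ≤ t ∧
    volume {y : EuclideanSpace ℝ (Fin n) | t < u y} ≤
      volume (ball (0 : EuclideanSpace ℝ (Fin n)) ‖x‖)}

open Set Filter Topology

section Aux

variable {n : ℕ}

/-- The defining set of the rearrangement is nonempty whenever the target volume is
positive, thanks to the vanishing-at-infinity hypothesis. -/
lemma HL_S_nonempty {u : EuclideanSpace ℝ (Fin n) → ℝ} (hu : Measurable u)
    (huvan : ∀ t : ℝ, 0 < t → volume {y : EuclideanSpace ℝ (Fin n) | t < u y} < ⊤)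
    {V : ENNReal} (hV : 0 < V) :
    {t : ℝ | 0 ≤ t ∧ volume {y : EuclideanSpace ℝ (Fin n) | t < u y} ≤ V}.Nonempty := by
  have hA : Tendsto (fun k : ℕ => volume {y : EuclideanSpace ℝ (Fin n) | (1 + k : ℝ) < u y})
      atTop (𝓝 (volume (⋂ k : ℕ, {y : EuclideanSpace ℝ (Fin n) | (1 + k : ℝ) < u y}))) := by
    apply tendsto_measure_iInter_atTop
    · exact fun k => (hu measurableSet_Ioi).nullMeasurableSet
    · intro k k' hk y hy
      simp only [mem_setOf_eq] at hy ⊢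
      have hkk : (k : ℝ) ≤ k' := Nat.cast_le.mpr hk
      have : (1 + k : ℝ) ≤ 1 + k' := by linarith
      linarith
    · exact ⟨0, by simpa using (huvan 1 one_pos).ne⟩
  have hempty : (⋂ k : ℕ, {y : EuclideanSpace ℝ (Fin n) | (1 + k : ℝ) < u y}) = ∅ := by
    ext y
    simp only [mem_iInter, mem_setOf_eq, mem_empty_iff_false, iff_false, not_forall, not_lt]
    obtain ⟨k, hk⟩ := exists_nat_gt (u y)
    exact ⟨k, by linarith⟩
  rw [hempty] at hA; rw [measure_empty] at hA
  obtain ⟨k, hk⟩ := (hA.eventually_lt_const hV).exists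
  exact ⟨1 + k, by positivity, hk.le⟩

/-- Key property: if the ball of radius `‖x‖` has smaller volume than the superlevel
set `{u > s}`, then `u* x > s`. -/
lemma HL_lt_rearrangement {u : EuclideanSpace ℝ (Fin n) → ℝ} (hu : Measurable u)
    (huvan : ∀ t : ℝ, 0 < t → volume {y : EuclideanSpace ℝ (Fin n) | t < u y} < ⊤)
    {s : ℝ} (hs : 0 ≤ s) {x : EuclideanSpace ℝ (Fin n)}
    (h0 : 0 < volume (ball (0 : EuclideanSpace ℝ (Fin n)) ‖x‖))
    (hlt : volume (ball (0 : EuclideanSpace ℝ (Fin n)) ‖x‖)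
      < volume {y : EuclideanSpace ℝ (Fin n) | s < u y}) :
    s < symmetricRearrangement n u x := by
  set V := volume (ball (0 : EuclideanSpace ℝ (Fin n)) ‖x‖) with hV
  set S := {t : ℝ | 0 ≤ t ∧ volume {y : EuclideanSpace ℝ (Fin n) | t < u y} ≤ V} with hS
  have hne : S.Nonempty := HL_S_nonempty hu huvan h0
  by_contra hcon
  push_neg at hcon
  have hsub : Ioi s ⊆ S := by
    intro r hr
    obtain ⟨t, htS, htr⟩ := exists_lt_of_csInf_lt hne (lt_of_le_of_lt hcon hr)
    refine ⟨hs.trans hr.le, le_trans (measure_mono ?_) htS.2⟩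
    intro y hy
    exact lt_trans htr hy
  have hfin : volume {y : EuclideanSpace ℝ (Fin n) | s < u y} ≤ V := by
    have hU : {y : EuclideanSpace ℝ (Fin n) | s < u y}
        = ⋃ k : ℕ, {y : EuclideanSpace ℝ (Fin n) | s + ((k : ℝ) + 1)⁻¹ < u y} := by
      ext y
      simp only [mem_setOf_eq, mem_iUnion]
      constructor
      · intro h
        obtain ⟨k, hk⟩ := exists_nat_one_div_lt (show (0:ℝ) < u y - s by linarith)
        rw [one_div] at hk
        exact ⟨k, by linarith⟩
      · rintro ⟨k, hk⟩
        have : (0:ℝ) < ((k : ℝ) + 1)⁻¹ := by positivity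
        linarith
    rw [hU]
    have hdir : Directed (· ⊆ ·)
        (fun k : ℕ => {y : EuclideanSpace ℝ (Fin n) | s + ((k : ℝ) + 1)⁻¹ < u y}) := by
      apply Monotone.directed_le
      intro k k' hk y hy
      simp only [mem_setOf_eq] at hy ⊢
      have h1 : ((k' : ℝ) + 1)⁻¹ ≤ ((k : ℝ) + 1)⁻¹ := by
        apply inv_anti₀ (by positivity)
        have : (k : ℝ) ≤ k' := Nat.cast_le.mpr hk
        linarith
      linarith
    rw [hdir.measure_iUnion]
    exact iSup_le fun k => (hsub (lt_add_of_pos_right s (by positivity))).2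
  exact absurd hfin (not_le.mpr hlt)

/-- The symmetric rearrangement is measurable. -/
lemma HL_rearrangement_measurable {u : EuclideanSpace ℝ (Fin n) → ℝ} (hu : Measurable u)
    (huvan : ∀ t : ℝ, 0 < t → volume {y : EuclideanSpace ℝ (Fin n) | t < u y} < ⊤) :
    Measurable (symmetricRearrangement n u) := by
  set g : ℝ → ℝ := fun r => sInf {t : ℝ | 0 ≤ t ∧
      volume {y : EuclideanSpace ℝ (Fin n) | t < u y}
        ≤ volume (ball (0 : EuclideanSpace ℝ (Fin n)) r)} with hg
  have hgx : ∀ x, symmetricRearrangement n u x = g ‖x‖ := fun x => rfl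
  have hanti : ∀ r r' : ℝ, 0 < r → r ≤ r' → g r' ≤ g r := by
    intro r r' hr hrr'
    apply csInf_le_csInf
    · exact ⟨0, fun t ht => ht.1⟩
    · exact HL_S_nonempty hu huvan (measure_ball_pos _ _ hr)
    · intro t ht
      exact ⟨ht.1, le_trans ht.2 (measure_mono (ball_subset_ball hrr'))⟩
  apply measurable_of_Ioi
  intro a
  set T : Set ℝ := {r : ℝ | 0 < r ∧ a < g r} with hT
  have hTmeas : MeasurableSet T := by
    apply Set.OrdConnected.measurableSet
    constructor
    intro r1 h1 r2 h2 c hc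
    exact ⟨lt_of_lt_of_le h1.1 hc.1,
      lt_of_lt_of_le h2.2 (hanti c r2 (lt_of_lt_of_le h1.1 hc.1) hc.2)⟩
  have hset : (symmetricRearrangement n u) ⁻¹' Ioi a
      = (fun x : EuclideanSpace ℝ (Fin n) => ‖x‖) ⁻¹' T
        ∪ (if a < g 0 then {(0 : EuclideanSpace ℝ (Fin n))} else ∅) := by
    ext x
    by_cases hx : x = 0
    · subst hx
      simp only [mem_preimage, mem_union, mem_Ioi, hgx, norm_zero]
      constructor
      · intro h
        right
        rw [if_pos h]
        rfl
      · rintro (h | h)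
        · exact absurd h.1 (lt_irrefl 0)
        · by_cases hag : a < g 0
          · exact hag
          · rw [if_neg hag] at h; exact absurd h (notMem_empty _)
    · have hx0 : 0 < ‖x‖ := norm_pos_iff.mpr hx
      simp only [mem_preimage, mem_union, mem_Ioi, hgx]
      constructor
      · intro h
        exact Or.inl ⟨hx0, h⟩
      · rintro (h | h)
        · exact h.2
        · exfalso
          by_cases hag : a < g 0
          · rw [if_pos hag] at h
            exact hx (mem_singleton_iff.mp h)
          · rw [if_neg hag] at h
            exact notMem_empty _ h
  rw [hset]
  apply MeasurableSet.union
  · exact measurable_norm hTmeas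
  · split
    · exact measurableSet_singleton _
    · exact MeasurableSet.empty

/-- Double layer-cake formula. -/
lemma HL_double_layercake {α : Type*} [MeasurableSpace α] (μ : Measure α)
    {f g : α → ℝ} (hf : Measurable f) (hg : Measurable g)
    (hf0 : ∀ x, 0 ≤ f x) (hg0 : ∀ x, 0 ≤ g x) :
    ∫⁻ x, ENNReal.ofReal (f x) * ENNReal.ofReal (g x) ∂μ
      = ∫⁻ s in Ioi (0:ℝ), ∫⁻ t in Ioi (0:ℝ),
          μ ({x | t < g x} ∩ {x | s < f x}) := by
  set ν := μ.withDensity (fun x => ENNReal.ofReal (g x)) with hν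
  have hgm : Measurable fun x => ENNReal.ofReal (g x) := hg.ennreal_ofReal
  have h1 : ∫⁻ x, ENNReal.ofReal (f x) * ENNReal.ofReal (g x) ∂μ
      = ∫⁻ x, ENNReal.ofReal (f x) ∂ν := by
    rw [hν, lintegral_withDensity_eq_lintegral_mul μ hgm hf.ennreal_ofReal]
    simp only [Pi.mul_apply, mul_comm]
  rw [h1, lintegral_eq_lintegral_meas_lt ν (Eventually.of_forall hf0) hf.aemeasurable]
  apply setLIntegral_congr_fun measurableSet_Ioi
  intro s _
  beta_reduce
  have hmsf : MeasurableSet {x | s < f x} := hf measurableSet_Ioi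
  rw [hν, withDensity_apply _ hmsf,
    lintegral_eq_lintegral_meas_lt (μ.restrict {x | s < f x})
      (Eventually.of_forall hg0) hg.aemeasurable]
  apply setLIntegral_congr_fun measurableSet_Ioi
  intro t _
  beta_reduce
  exact Measure.restrict_apply (hg measurableSet_Ioi)

/-- Lower bound for the measure of the intersection of superlevel sets of the
rearrangements, in positive dimension. -/
lemma HL_min_le_inter_rearr {u v : EuclideanSpace ℝ (Fin (n+1)) → ℝ}
    (hu : Measurable u) (hv : Measurable v)
    (huvan : ∀ t : ℝ, 0 < t → volume {y : EuclideanSpace ℝ (Fin (n+1)) | t < u y} < ⊤)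
    (hvvan : ∀ t : ℝ, 0 < t → volume {y : EuclideanSpace ℝ (Fin (n+1)) | t < v y} < ⊤)
    {s t : ℝ} (hs : 0 < s) (ht : 0 < t) :
    min (volume {y : EuclideanSpace ℝ (Fin (n+1)) | s < u y})
        (volume {y : EuclideanSpace ℝ (Fin (n+1)) | t < v y})
      ≤ volume ({x : EuclideanSpace ℝ (Fin (n+1)) | t < symmetricRearrangement (n+1) v x}
          ∩ {x : EuclideanSpace ℝ (Fin (n+1)) | s < symmetricRearrangement (n+1) u x}) := by
  set m := min (volume {y : EuclideanSpace ℝ (Fin (n+1)) | s < u y})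
    (volume {y : EuclideanSpace ℝ (Fin (n+1)) | t < v y}) with hm
  have hmtop : m ≠ ⊤ := (lt_of_le_of_lt (min_le_left _ _) (huvan s hs)).ne
  set c := volume (ball (0 : EuclideanSpace ℝ (Fin (n+1))) 1) with hc
  have hc0 : c ≠ 0 := (measure_ball_pos _ _ one_pos).ne'
  have hctop : c ≠ ⊤ := measure_ball_lt_top.ne
  set r : ℝ := ((m / c).toReal) ^ (((n+1 : ℕ) : ℝ)⁻¹) with hr
  have hr0 : 0 ≤ r := Real.rpow_nonneg ENNReal.toReal_nonneg _
  have hrpow : r ^ (n+1) = (m / c).toReal :=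
    Real.rpow_inv_natCast_pow ENNReal.toReal_nonneg (Nat.succ_ne_zero n)
  have hfr : Module.finrank ℝ (EuclideanSpace ℝ (Fin (n+1))) = n + 1 := finrank_euclideanSpace_fin
  have hball : volume (ball (0 : EuclideanSpace ℝ (Fin (n+1))) r) = m := by
    rw [Measure.addHaar_ball volume (0 : EuclideanSpace ℝ (Fin (n+1))) hr0, hfr, hrpow,
      ENNReal.ofReal_toReal (ENNReal.div_lt_top hmtop hc0).ne, ← hc,
      ENNReal.div_mul_cancel hc0 hctop]
  have hsub : ball (0 : EuclideanSpace ℝ (Fin (n+1))) r \ {(0 : EuclideanSpace ℝ (Fin (n+1)))} ⊆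
      ({x : EuclideanSpace ℝ (Fin (n+1)) | t < symmetricRearrangement (n+1) v x}
        ∩ {x : EuclideanSpace ℝ (Fin (n+1)) | s < symmetricRearrangement (n+1) u x}) := by
    rintro x ⟨hxr', hx0⟩
    have hxr : ‖x‖ < r := by simpa [mem_ball, dist_zero_right] using hxr'
    have hxpos : 0 < ‖x‖ := norm_pos_iff.mpr hx0
    have hVx : volume (ball (0 : EuclideanSpace ℝ (Fin (n+1))) ‖x‖) < m := by
      rw [Measure.addHaar_ball volume (0 : EuclideanSpace ℝ (Fin (n+1))) (norm_nonneg x), hfr,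
        ← hball, Measure.addHaar_ball volume (0 : EuclideanSpace ℝ (Fin (n+1))) hr0, hfr]
      apply ENNReal.mul_lt_mul_left hc0 hctop
      have hrpos : 0 < r := lt_of_le_of_lt (norm_nonneg x) hxr
      rw [ENNReal.ofReal_lt_ofReal_iff (by positivity)]
      exact pow_lt_pow_left₀ hxr (norm_nonneg x) (Nat.succ_ne_zero n)
    have hV0 : 0 < volume (ball (0 : EuclideanSpace ℝ (Fin (n+1))) ‖x‖) :=
      measure_ball_pos _ _ hxpos
    constructor
    · exact HL_lt_rearrangement hv hvvan ht.le hV0 (lt_of_lt_of_le hVx (min_le_right _ _))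
    · exact HL_lt_rearrangement hu huvan hs.le hV0 (lt_of_lt_of_le hVx (min_le_left _ _))
  calc m = volume (ball (0 : EuclideanSpace ℝ (Fin (n+1))) r
        \ {(0 : EuclideanSpace ℝ (Fin (n+1)))}) := by
        rw [measure_diff_null (measure_singleton _), hball]
    _ ≤ _ := measure_mono hsub

/-- In dimension zero the rearrangement coincides with the function itself. -/
lemma HL_rearr_dim_zero (u : EuclideanSpace ℝ (Fin 0) → ℝ) (hu0 : ∀ x, 0 ≤ u x)
    (x : EuclideanSpace ℝ (Fin 0)) : symmetricRearrangement 0 u x = u x := by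
  haveI : Subsingleton (EuclideanSpace ℝ (Fin 0)) :=
    ⟨fun a b => (WithLp.equiv 2 _).injective (funext fun i => Fin.elim0 i)⟩
  have hx0 : x = 0 := Subsingleton.elim _ _
  have hnorm : ‖x‖ = 0 := by rw [hx0, norm_zero]
  have huniv : 0 < volume (univ : Set (EuclideanSpace ℝ (Fin 0))) :=
    isOpen_univ.measure_pos volume univ_nonempty
  have hset : ∀ t : ℝ, {y : EuclideanSpace ℝ (Fin 0) | t < u y}
      = if t < u x then univ else ∅ := by
    intro t
    split
    · next h => exact eq_univ_of_forall fun y => by rwa [Subsingleton.elim y x]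
    · next h => exact eq_empty_of_forall_notMem fun y hy => h (by rwa [Subsingleton.elim x y])
  have hS : {t : ℝ | 0 ≤ t ∧
      volume {y : EuclideanSpace ℝ (Fin 0) | t < u y}
        ≤ volume (ball (0 : EuclideanSpace ℝ (Fin 0)) ‖x‖)} = Ici (u x) := by
    rw [hnorm, ball_zero]
    ext t
    simp only [mem_setOf_eq, measure_empty, nonpos_iff_eq_zero, mem_Ici, hset t]
    constructor
    · rintro ⟨ht0, hvol⟩
      by_contra hlt
      push_neg at hlt
      rw [if_pos hlt] at hvol
      exact huniv.ne' hvol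
    · intro h
      refine ⟨(hu0 x).trans h, ?_⟩
      rw [if_neg (not_lt.mpr h)]
      exact measure_empty
  rw [symmetricRearrangement, hS, csInf_Ici]

end Aux

/-- Hardy–Littlewood inequality: for nonnegative measurable `u, v` on `ℝⁿ`
vanishing at infinity, `∫ u v ≤ ∫ u* v*`. -/
theorem hardy_littlewood_rearrangement
    (n : ℕ) (u v : EuclideanSpace ℝ (Fin n) → ℝ)
    (hu : Measurable u) (hv : Measurable v)
    (hu0 : ∀ x, 0 ≤ u x) (hv0 : ∀ x, 0 ≤ v x)
    (huvan : ∀ t : ℝ, 0 < t → volume {y : EuclideanSpace ℝ (Fin n) | t < u y} < ⊤)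
    (hvvan : ∀ t : ℝ, 0 < t → volume {y : EuclideanSpace ℝ (Fin n) | t < v y} < ⊤) :
    ∫⁻ x, ENNReal.ofReal (u x * v x) ≤
      ∫⁻ x, ENNReal.ofReal (symmetricRearrangement n u x * symmetricRearrangement n v x) := by
  obtain _ | n := n
  · apply le_of_eq
    apply lintegral_congr
    intro x
    rw [HL_rearr_dim_zero u hu0 x, HL_rearr_dim_zero v hv0 x]
  · have hum : Measurable (symmetricRearrangement (n+1) u) :=
      HL_rearrangement_measurable hu huvan
    have hvm : Measurable (symmetricRearrangement (n+1) v) :=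
      HL_rearrangement_measurable hv hvvan
    have hu0' : ∀ x, 0 ≤ symmetricRearrangement (n+1) u x :=
      fun x => Real.sInf_nonneg fun t ht => ht.1
    have hv0' : ∀ x, 0 ≤ symmetricRearrangement (n+1) v x :=
      fun x => Real.sInf_nonneg fun t ht => ht.1
    calc ∫⁻ x, ENNReal.ofReal (u x * v x)
        = ∫⁻ x, ENNReal.ofReal (u x) * ENNReal.ofReal (v x) := by
          apply lintegral_congr
          intro x
          exact ENNReal.ofReal_mul (hu0 x)
      _ = ∫⁻ s in Ioi (0:ℝ), ∫⁻ t in Ioi (0:ℝ),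
            volume ({x : EuclideanSpace ℝ (Fin (n+1)) | t < v x}
              ∩ {x : EuclideanSpace ℝ (Fin (n+1)) | s < u x}) :=
          HL_double_layercake volume hu hv hu0 hv0
      _ ≤ ∫⁻ s in Ioi (0:ℝ), ∫⁻ t in Ioi (0:ℝ),
            volume ({x : EuclideanSpace ℝ (Fin (n+1)) | t < symmetricRearrangement (n+1) v x}
              ∩ {x : EuclideanSpace ℝ (Fin (n+1)) | s < symmetricRearrangement (n+1) u x}) := by
          apply setLIntegral_mono' measurableSet_Ioi
          intro s hs
          apply setLIntegral_mono' measurableSet_Ioi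
          intro t ht
          calc volume ({x : EuclideanSpace ℝ (Fin (n+1)) | t < v x}
              ∩ {x : EuclideanSpace ℝ (Fin (n+1)) | s < u x})
              ≤ min (volume {y : EuclideanSpace ℝ (Fin (n+1)) | s < u y})
                  (volume {y : EuclideanSpace ℝ (Fin (n+1)) | t < v y}) :=
                le_min (measure_mono inter_subset_right) (measure_mono inter_subset_left)
            _ ≤ _ := HL_min_le_inter_rearr hu hv huvan hvvan hs ht
      _ = ∫⁻ x, ENNReal.ofReal (symmetricRearrangement (n+1) u x)
            * ENNReal.ofReal (symmetricRearrangement (n+1) v x) :=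
          (HL_double_layercake volume hum hvm hu0' hv0').symm
      _ = ∫⁻ x, ENNReal.ofReal (symmetricRearrangement (n+1) u x
            * symmetricRearrangement (n+1) v x) := by
          apply lintegral_congr
          intro x
          exact (ENNReal.ofReal_mul (hu0' x)).symm
end

section
/- (Bathtub principle on a sigma-finite measure space, characteristic-function maximizer) Let (X, Σ, μ) be a sigma-finite measure space, f : X → ℝ a measurable function, G > 0 a constant, and suppose there exists s ∈ ℝ with μ({x : f(x) ≥ s}) = G. Then for every measurable g : X → [0,1] with ∫_X g dμ = G, one has ∫_X f·g dμ ≤ ∫_{\{f ≥ s\}} f dμ. -/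
open MeasureTheory

/-- Bathtub principle on a sigma-finite measure space (characteristic-function
maximizer): if `μ{f ≥ s} = G`, then for every measurable `g : X → [0,1]`
with `∫ g dμ = G`, one has `∫ f g dμ ≤ ∫_{f ≥ s} f dμ`. -/
theorem bathtub_principle
    {X : Type*} [MeasurableSpace X] (μ : Measure X) [SigmaFinite μ]
    (f : X → ℝ) (hf : Measurable f)
    (hfloc : ∀ E : Set X, MeasurableSet E → μ E < ⊤ → IntegrableOn f E μ)
    (G : ℝ) (hG : 0 < G) (s : ℝ)
    (hs : μ {x | s ≤ f x} = ENNReal.ofReal G)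
    (g : X → ℝ) (hg : Measurable g)
    (hg0 : ∀ x, 0 ≤ g x) (hg1 : ∀ x, g x ≤ 1)
    (hgint : Integrable g μ) (hgG : ∫ x, g x ∂μ = G)
    (hfg : Integrable (fun x => f x * g x) μ) :
    ∫ x, f x * g x ∂μ ≤ ∫ x in {x | s ≤ f x}, f x ∂μ := by
  set E : Set X := {x | s ≤ f x} with hE_def
  have hE : MeasurableSet E := measurableSet_le measurable_const hf
  have hμE : μ E < ⊤ := by rw [hs]; exact ENNReal.ofReal_lt_top
  have hfE : IntegrableOn f E μ := hfloc E hE hμE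
  set χ : X → ℝ := E.indicator (fun _ => (1:ℝ)) with hχ_def
  have hχint : Integrable χ μ := by
    rw [hχ_def, integrable_indicator_iff hE]
    exact integrableOn_const hμE.ne
  have hχG : ∫ x, χ x ∂μ = G := by
    rw [hχ_def, integral_indicator hE, setIntegral_const, smul_eq_mul, mul_one,
      measureReal_def, hs, ENNReal.toReal_ofReal hG.le]
  have hfχ : Integrable (fun x => f x * χ x) μ := by
    have : (fun x => f x * χ x) = E.indicator f := by
      funext x
      by_cases hx : x ∈ E <;>
        simp [hχ_def, Set.indicator_of_mem, Set.indicator_of_notMem, hx]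
    rw [this, integrable_indicator_iff hE]
    exact hfE
  have hsetint : ∫ x in E, f x ∂μ = ∫ x, f x * χ x ∂μ := by
    rw [← integral_indicator hE]
    congr 1
    funext x
    by_cases hx : x ∈ E <;>
      simp [hχ_def, Set.indicator_of_mem, Set.indicator_of_notMem, hx]
  have key : ∫ x, (f x * g x - f x * χ x) ∂μ ≤ 0 := by
    have hpt : ∀ x, f x * g x - f x * χ x ≤ s * (g x - χ x) := by
      intro x
      have : f x * g x - f x * χ x = f x * (g x - χ x) := by ring
      rw [this]
      by_cases hx : x ∈ E
      · have h1 : χ x = 1 := Set.indicator_of_mem hx _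
        have ht : g x - χ x ≤ 0 := by rw [h1]; linarith [hg1 x]
        exact mul_le_mul_of_nonpos_right hx ht
      · have h0 : χ x = 0 := Set.indicator_of_notMem hx _
        have hlt : f x < s := not_le.mp hx
        have ht : 0 ≤ g x - χ x := by rw [h0]; simpa using hg0 x
        exact mul_le_mul_of_nonneg_right hlt.le ht
    have hint1 : Integrable (fun x => f x * g x - f x * χ x) μ := hfg.sub hfχ
    have hint2 : Integrable (fun x => s * (g x - χ x)) μ :=
      (hgint.sub hχint).const_mul s
    calc ∫ x, (f x * g x - f x * χ x) ∂μ
        ≤ ∫ x, s * (g x - χ x) ∂μ := integral_mono hint1 hint2 hpt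
      _ = s * ∫ x, (g x - χ x) ∂μ := integral_const_mul s _
      _ = s * (G - G) := by rw [integral_sub hgint hχint, hgG, hχG]
      _ = 0 := by ring
  have := integral_sub hfg hfχ
  rw [hsetint]
  linarith [key, this ▸ key]
end
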